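/- Suppose $\{A_n\}_n$ is a sequence of matrices $A_n \in \mathbb{C}^{d_n\times d_n}$ distributed in the singular value sense as a measurable matrix-valued function $F$, and suppose $\{A_n - B_n\}_n$ is zero-distributed with $\|A_n\|, \|B_n\|$ uniformly bounded. Then $\{B_n\}_n$ is also distributed as $F$ in the singular value sense: for every continuous compactly supported $G$, $\frac{1}{d_n}\sum_j G(\sigma_j(B_n))$ has the same limit as $\frac{1}{d_n}\sum_j G(\sigma_j(A_n))$. -/

import Mathlib

open Filter Finset Matrix Topology MeasureTheory
open scoped Matrix.Norms.L2Operator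

set_option linter.unusedSectionVars false
set_option maxHeartbeats 1000000

/-- The (unsorted) singular values of a complex matrix: square roots of the
eigenvalues of `Aᴴ * A`. -/
noncomputable def svals {m n : Type*} [Fintype m] [Fintype n] [DecidableEq n]
    (A : Matrix m n ℂ) (i : n) : ℝ :=
  Real.sqrt ((Matrix.isHermitian_conjTranspose_mul_self A).eigenvalues i)

/-- Singular values of a `Fin p × Fin q`-indexed complex matrix, arranged in
non-increasing order and indexed by `ℕ` (zero for indices `≥ q`); so
`svalFun A 0` is the largest singular value `σ₁(A)`. -/
noncomputable def svalFun {p q : ℕ} (A : Matrix (Fin p) (Fin q) ℂ) (j : ℕ) : ℝ :=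
  if h : j < q then svals A (Tuple.sort (svals A) ((⟨j, h⟩ : Fin q).rev)) else 0

/-- The spectral norm of a complex matrix: its largest singular value. -/
noncomputable def specNorm {m n : Type*} [Fintype m] [Fintype n] [DecidableEq n]
    (A : Matrix m n ℂ) : ℝ :=
  ⨆ i, svals A i

variable {l m n : Type*} [Fintype l] [Fintype m] [Fintype n] [DecidableEq l] [DecidableEq m] [DecidableEq n]

lemma svals_nonneg (A : Matrix m n ℂ) (i : n) : 0 ≤ svals A i := Real.sqrt_nonneg _

lemma svals_le_specNorm (A : Matrix m n ℂ) (i : n) : svals A i ≤ specNorm A :=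
  le_ciSup (Set.Finite.bddAbove (Set.finite_range _)) i

lemma sq_svals (A : Matrix m n ℂ) (i : n) :
    svals A i ^ 2 = (Matrix.isHermitian_conjTranspose_mul_self A).eigenvalues i :=
  Real.sq_sqrt (Matrix.eigenvalues_conjTranspose_mul_self_nonneg A i)

lemma sq_le_sq_imp_le {a b : ℝ} (hb : 0 ≤ b) (h : a ^ 2 ≤ b ^ 2) : a ≤ b := by nlinarith

-- diagonal norm bound
lemma norm_diagonal_le {v : n → ℂ} {c : ℝ} (hc : 0 ≤ c) (h : ∀ i, ‖v i‖ ≤ c) :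
    ‖Matrix.diagonal v‖ ≤ c := by
  rw [Matrix.l2_opNorm_def]
  refine ContinuousLinearMap.opNorm_le_bound _ hc (fun x => ?_)
  have key : ∀ i, ((Matrix.toEuclideanLin.trans LinearMap.toContinuousLinearMap)
      (Matrix.diagonal v)) x i = v i * x i := fun i => Matrix.mulVec_diagonal v x i
  rw [EuclideanSpace.norm_eq, EuclideanSpace.norm_eq]
  simp_rw [key]
  rw [← Real.sqrt_sq hc, ← Real.sqrt_mul (sq_nonneg c)]
  refine Real.sqrt_le_sqrt ?_
  rw [Finset.mul_sum]
  refine Finset.sum_le_sum fun i _ => ?_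
  rw [norm_mul, mul_pow]
  exact mul_le_mul_of_nonneg_right (by
    exact pow_le_pow_left₀ (norm_nonneg _) (h i) 2) (sq_nonneg _)

lemma sval_le_norm (X : Matrix m n ℂ) (i : n) : svals X i ≤ ‖X‖ := by
  set hM := Matrix.isHermitian_conjTranspose_mul_self X
  set μ := hM.eigenvalues i with hμ
  have hμ0 : 0 ≤ μ := Matrix.eigenvalues_conjTranspose_mul_self_nonneg X i
  have hv1 : ‖hM.eigenvectorBasis i‖ = 1 := hM.eigenvectorBasis.orthonormal.1 i
  have hmv : (Xᴴ * X) *ᵥ ⇑(hM.eigenvectorBasis i) = μ • ⇑(hM.eigenvectorBasis i) :=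
    hM.mulVec_eigenvectorBasis i
  have h1 : ‖(EuclideanSpace.equiv n ℂ).symm <| (Xᴴ * X) *ᵥ ⇑(hM.eigenvectorBasis i)‖
      ≤ ‖Xᴴ * X‖ * ‖hM.eigenvectorBasis i‖ := Matrix.l2_opNorm_mulVec _ _
  rw [hmv] at h1
  have h2 : (EuclideanSpace.equiv n ℂ).symm (μ • ⇑(hM.eigenvectorBasis i))
      = μ • hM.eigenvectorBasis i := rfl
  rw [h2, norm_smul, hv1, Real.norm_eq_abs, abs_of_nonneg hμ0, mul_one, mul_one,
    Matrix.l2_opNorm_conjTranspose_mul_self] at h1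
  have : svals X i ^ 2 ≤ ‖X‖ ^ 2 := by rw [sq_svals]; nlinarith [norm_nonneg X]
  exact sq_le_sq_imp_le (norm_nonneg X) this

lemma norm_le_specNorm (X : Matrix n n ℂ) : ‖X‖ ≤ specNorm X := by
  rcases isEmpty_or_nonempty n with hn | hn
  · have : X = 0 := Subsingleton.elim _ _
    simp [this, specNorm, ciSup_of_empty, Real.sSup_empty]
  · set hM := Matrix.isHermitian_conjTranspose_mul_self X
    set s := specNorm X with hs
    have hs0 : 0 ≤ s := le_trans (svals_nonneg X (Classical.arbitrary n)) (svals_le_specNorm X _)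
    have hD : ‖Matrix.diagonal (RCLike.ofReal ∘ hM.eigenvalues : n → ℂ)‖ ≤ s ^ 2 := by
      refine norm_diagonal_le (sq_nonneg s) fun i => ?_
      have h1 : svals X i ≤ s := svals_le_specNorm X i
      have h0 : 0 ≤ hM.eigenvalues i := Matrix.eigenvalues_conjTranspose_mul_self_nonneg X i
      have : hM.eigenvalues i ≤ s ^ 2 := by
        have := sq_svals X i
        nlinarith [svals_nonneg X i]
      simpa [Function.comp, Complex.norm_real, abs_of_nonneg h0] using this.trans_eq rfl
    have hspec := hM.spectral_theorem
    have hU : ((Matrix.IsHermitian.eigenvectorUnitary hM : Matrix n n ℂ)) ∈ unitary (Matrix n n ℂ) := by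
      exact (Matrix.IsHermitian.eigenvectorUnitary hM).2
    have hM' : ‖Xᴴ * X‖ ≤ s ^ 2 := by
      rw [hspec, Unitary.conjStarAlgAut_apply]
      rw [mul_assoc]
      rw [CStarRing.norm_mem_unitary_mul _ hU]
      rw [CStarRing.norm_mul_mem_unitary _ (Unitary.star_mem hU)]
      exact hD
    have : ‖X‖ ^ 2 ≤ s ^ 2 := by
      rw [sq, ← Matrix.l2_opNorm_conjTranspose_mul_self]; nlinarith [hs0]
    exact sq_le_sq_imp_le hs0 this

noncomputable def frob {m n : Type*} [Fintype m] [Fintype n] (X : Matrix m n ℂ) : ℝ :=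
  ‖((WithLp.equiv 2 (m × n → ℂ)).symm (fun p => X p.1 p.2) : EuclideanSpace ℂ (m × n))‖

lemma frob_nonneg (X : Matrix m n ℂ) : 0 ≤ frob X := norm_nonneg _

lemma frob_eq (X : Matrix m n ℂ) : frob X = Real.sqrt (∑ i, ∑ j, ‖X i j‖ ^ 2) := by
  rw [frob, EuclideanSpace.norm_eq]
  simp only [WithLp.equiv_symm_apply, PiLp.toLp_apply]
  exact congrArg Real.sqrt (Fintype.sum_prod_type (f := fun p => ‖X p.1 p.2‖ ^ 2))

lemma frob_sq (X : Matrix m n ℂ) : frob X ^ 2 = ∑ i, ∑ j, ‖X i j‖ ^ 2 := by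
  rw [frob_eq, Real.sq_sqrt]
  positivity

lemma frob_add_le (X Y : Matrix m n ℂ) : frob (X + Y) ≤ frob X + frob Y := by
  unfold frob
  have : ((WithLp.equiv 2 (m × n → ℂ)).symm (fun p => (X + Y) p.1 p.2) : EuclideanSpace ℂ (m × n))
      = (WithLp.equiv 2 (m × n → ℂ)).symm (fun p => X p.1 p.2)
        + (WithLp.equiv 2 (m × n → ℂ)).symm (fun p => Y p.1 p.2) := rfl
  rw [this]
  exact norm_add_le _ _

lemma frob_neg (X : Matrix m n ℂ) : frob (-X) = frob X := by
  rw [frob_eq, frob_eq]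
  simp

lemma frob_conjTranspose (X : Matrix m n ℂ) : frob Xᴴ = frob X := by
  rw [frob_eq, frob_eq, Finset.sum_comm]
  simp [Matrix.conjTranspose_apply]

lemma frob_mul_le_left (M : Matrix l m ℂ) (X : Matrix m n ℂ) :
    frob (M * X) ≤ ‖M‖ * frob X := by
  refine sq_le_sq_imp_le (mul_nonneg (norm_nonneg M) (frob_nonneg X)) ?_
  rw [mul_pow, frob_sq, frob_sq, Finset.sum_comm, Finset.sum_comm (γ := m)]
  rw [Finset.mul_sum]
  refine Finset.sum_le_sum fun j _ => ?_
  have hcol : ∀ i, (M * X) i j = (M *ᵥ (fun k => X k j)) i := fun i => Matrix.mul_apply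
  have hM := Matrix.l2_opNorm_mulVec M ((WithLp.equiv 2 (m → ℂ)).symm (fun k => X k j))
  have h1 : ‖(EuclideanSpace.equiv l ℂ).symm
        (M *ᵥ ((WithLp.equiv 2 (m → ℂ)).symm fun k => X k j))‖
      = Real.sqrt (∑ i, ‖(M * X) i j‖ ^ 2) := by
    rw [EuclideanSpace.norm_eq]
    refine congrArg Real.sqrt (Finset.sum_congr rfl fun i _ => ?_)
    have he : (EuclideanSpace.equiv l ℂ).symm
        (M *ᵥ ((WithLp.equiv 2 (m → ℂ)).symm fun k => X k j)) i = (M * X) i j := by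
      show (M *ᵥ fun k => X k j) i = (M * X) i j
      rw [hcol i]
    rw [he]
  have h2 : ‖((WithLp.equiv 2 (m → ℂ)).symm fun k => X k j : EuclideanSpace ℂ m)‖
      = Real.sqrt (∑ k, ‖X k j‖ ^ 2) := by
    rw [EuclideanSpace.norm_eq]; rfl
  rw [h1, h2] at hM
  have h3 := pow_le_pow_left₀ (Real.sqrt_nonneg _) hM 2
  rw [Real.sq_sqrt (by positivity), mul_pow, Real.sq_sqrt (by positivity)] at h3
  exact h3

lemma frob_mul_le_right (X : Matrix m n ℂ) (M : Matrix n l ℂ) :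
    frob (X * M) ≤ frob X * ‖M‖ := by
  have h1 : frob (X * M) = frob ((X * M)ᴴ) := (frob_conjTranspose _).symm
  rw [h1, Matrix.conjTranspose_mul]
  calc frob (Mᴴ * Xᴴ) ≤ ‖Mᴴ‖ * frob Xᴴ := frob_mul_le_left _ _
    _ = frob X * ‖M‖ := by rw [Matrix.l2_opNorm_conjTranspose, frob_conjTranspose, mul_comm]

lemma norm_trace_le (X : Matrix n n ℂ) :
    ‖X.trace‖ ≤ Real.sqrt (Fintype.card n) * frob X := by
  have h1 : ‖X.trace‖ ≤ ∑ i, ‖X i i‖ := norm_sum_le _ _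
  have h2 : (∑ i, (1 : ℝ) * ‖X i i‖) ^ 2 ≤ (∑ _i : n, (1:ℝ) ^ 2) * ∑ i, ‖X i i‖ ^ 2 :=
    Finset.sum_mul_sq_le_sq_mul_sq Finset.univ _ _
  simp only [one_mul, one_pow, Finset.sum_const, Finset.card_univ, nsmul_eq_mul, mul_one] at h2
  have h3 : ∑ i, ‖X i i‖ ^ 2 ≤ ∑ i, ∑ j, ‖X i j‖ ^ 2 :=
    Finset.sum_le_sum fun i _ => Finset.single_le_sum (f := fun j => ‖X i j‖ ^ 2)
      (fun j _ => sq_nonneg _) (Finset.mem_univ i)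
  have h4 : (∑ i, ‖X i i‖) ^ 2 ≤ (Fintype.card n : ℝ) * frob X ^ 2 := by
    rw [frob_sq]
    exact h2.trans (mul_le_mul_of_nonneg_left h3 (Nat.cast_nonneg _))
  have h5 : ∑ i, ‖X i i‖ ≤ Real.sqrt (Fintype.card n) * frob X := by
    refine sq_le_sq_imp_le (mul_nonneg (Real.sqrt_nonneg _) (frob_nonneg _)) ?_
    rw [mul_pow, Real.sq_sqrt (Nat.cast_nonneg _)]
    exact h4
  exact h1.trans h5

lemma pow_spectral {M : Matrix n n ℂ} (hM : M.IsHermitian) (k : ℕ) :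
    M ^ k = (Matrix.IsHermitian.eigenvectorUnitary hM : Matrix n n ℂ)
      * (Matrix.diagonal (RCLike.ofReal ∘ hM.eigenvalues) ^ k)
      * (star (Matrix.IsHermitian.eigenvectorUnitary hM : Matrix n n ℂ)) := by
  set U := (Matrix.IsHermitian.eigenvectorUnitary hM : Matrix n n ℂ)
  have hUU : U * star U = 1 := Matrix.mem_unitaryGroup_iff.mp (Matrix.IsHermitian.eigenvectorUnitary hM).2
  have hUU' : star U * U = 1 := Matrix.mem_unitaryGroup_iff'.mp (Matrix.IsHermitian.eigenvectorUnitary hM).2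
  have hD : star U * M * U = Matrix.diagonal (RCLike.ofReal ∘ hM.eigenvalues) :=
    by
      conv_lhs => rw [hM.spectral_theorem, Unitary.conjStarAlgAut_apply]
      simp only [Matrix.mul_assoc, hUU, Matrix.mul_one]
      rw [← Matrix.mul_assoc, hUU', Matrix.one_mul, Matrix.mul_one]
  induction k with
  | zero => simp [pow_zero, hUU]
  | succ k ih =>
      have hstep : Matrix.diagonal (RCLike.ofReal ∘ hM.eigenvalues) ^ (k + 1)
          = Matrix.diagonal (RCLike.ofReal ∘ hM.eigenvalues) ^ k * (star U * M * U) := by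
        rw [hD, pow_succ]
      rw [pow_succ, ih, hstep]
      simp only [Matrix.mul_assoc]
      rw [hUU, Matrix.mul_one]

lemma trace_pow_hermitian {M : Matrix n n ℂ} (hM : M.IsHermitian) (k : ℕ) :
    (M ^ k).trace = ∑ i, ((hM.eigenvalues i : ℂ)) ^ k := by
  rw [pow_spectral hM k, Matrix.trace_mul_cycle]
  rw [Matrix.mem_unitaryGroup_iff'.mp (Matrix.IsHermitian.eigenvectorUnitary hM).2, Matrix.one_mul,
    Matrix.diagonal_pow, Matrix.trace_diagonal]
  simp [Function.comp]

lemma trace_hermitian {M : Matrix n n ℂ} (hM : M.IsHermitian) :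
    M.trace = ∑ i, ((hM.eigenvalues i : ℂ)) := by
  simpa using trace_pow_hermitian hM 1

lemma frob_sq_eq_sum_svals (X : Matrix n n ℂ) :
    frob X ^ 2 = ∑ i, svals X i ^ 2 := by
  have h1 : (Xᴴ * X).trace = ∑ i, (((Matrix.isHermitian_conjTranspose_mul_self X).eigenvalues i : ℂ)) :=
    trace_hermitian _
  have h2 : (Xᴴ * X).trace = ((∑ i, ∑ j, ‖X j i‖ ^ 2 : ℝ) : ℂ) := by
    rw [Matrix.trace]
    push_cast
    refine Finset.sum_congr rfl fun i _ => ?_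
    rw [Matrix.diag_apply, Matrix.mul_apply]
    push_cast
    refine Finset.sum_congr rfl fun j _ => ?_
    rw [Matrix.conjTranspose_apply, Complex.star_def,
      ← Complex.ofReal_pow, Complex.sq_norm, Complex.normSq_eq_conj_mul_self]
  rw [h2] at h1
  have h3 : (∑ i, ∑ j, ‖X j i‖ ^ 2 : ℝ) = ∑ i, (Matrix.isHermitian_conjTranspose_mul_self X).eigenvalues i := by
    have := h1
    rw [← Complex.ofReal_sum] at this 
    exact_mod_cast this
  rw [frob_sq, Finset.sum_comm, h3]
  exact Finset.sum_congr rfl fun i _ => (sq_svals X i).symm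

lemma svalFun_eq {p q : ℕ} (A : Matrix (Fin p) (Fin q) ℂ) {j : ℕ} (h : j < q) :
    svalFun A j = svals A (Tuple.sort (svals A) ((⟨j, h⟩ : Fin q).rev)) := dif_pos h

lemma svalFun_nonneg {p q : ℕ} (A : Matrix (Fin p) (Fin q) ℂ) (j : ℕ) : 0 ≤ svalFun A j := by
  unfold svalFun
  split
  · exact svals_nonneg A _
  · exact le_refl 0

lemma svalFun_le {p q : ℕ} (A : Matrix (Fin p) (Fin q) ℂ) {j : ℕ} (h : j < q) {c : ℝ}
    (hc : ∀ i, svals A i ≤ c) : svalFun A j ≤ c := by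
  rw [svalFun_eq A h]; exact hc _

lemma sum_svalFun {M : Type*} [AddCommMonoid M] {p : ℕ} (A : Matrix (Fin p) (Fin p) ℂ)
    (f : ℝ → M) : ∑ j ∈ Finset.range p, f (svalFun A j) = ∑ i, f (svals A i) := by
  rw [Finset.sum_range (fun j => f (svalFun A j))]
  have h1 : ∀ i : Fin p, f (svalFun A (i : ℕ)) = f (svals A ((Fin.revPerm.trans (Tuple.sort (svals A))) i)) := by
    intro i
    rw [svalFun_eq A i.isLt]
    simp [Fin.eta]
  rw [Finset.sum_congr rfl fun i _ => h1 i]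
  exact Fintype.sum_equiv _ _ _ fun i => rfl

lemma sum_eval_eq_trace {p : ℕ} (X : Matrix (Fin p) (Fin p) ℂ) (P : Polynomial ℂ) {N : ℕ}
    (hN : P.natDegree < N) :
    ∑ i, P.eval (((svals X i : ℝ) : ℂ) ^ 2)
      = ∑ k ∈ Finset.range N, P.coeff k * ((Xᴴ * X) ^ k).trace := by
  have hcast : ∀ i, (((svals X i : ℝ) : ℂ)) ^ 2
      = (((Matrix.isHermitian_conjTranspose_mul_self X).eigenvalues i : ℝ) : ℂ) := by
    intro i
    rw [← Complex.ofReal_pow, sq_svals]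
  calc ∑ i, P.eval (((svals X i : ℝ) : ℂ) ^ 2)
      = ∑ i : Fin p, ∑ k ∈ Finset.range N, P.coeff k
          * (((Matrix.isHermitian_conjTranspose_mul_self X).eigenvalues i : ℝ) : ℂ) ^ k := by
        refine Finset.sum_congr rfl fun i _ => ?_
        rw [hcast i, Polynomial.eval_eq_sum_range' hN]
    _ = ∑ k ∈ Finset.range N, P.coeff k * ((Xᴴ * X) ^ k).trace := by
        rw [Finset.sum_comm]
        refine Finset.sum_congr rfl fun k _ => ?_
        rw [← Finset.mul_sum, trace_pow_hermitian (Matrix.isHermitian_conjTranspose_mul_self X) k]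

/-- if `{Aₙ}ₙ ∼_σ F` and `{Aₙ - Bₙ}ₙ` is zero-distributed with
uniformly bounded spectral norms, then `{Bₙ}ₙ ∼_σ F` as well. -/
theorem distribution_invariant_under_zero_distributed_perturbation
    (d : ℕ → ℕ) (hd : Tendsto d atTop atTop) (r : ℕ) (hr : 0 < r)
    (Ω : Set ℝ) (hΩmeas : MeasurableSet Ω)
    (hΩpos : volume Ω ≠ 0) (hΩfin : volume Ω ≠ ⊤)
    (F : ℝ → Matrix (Fin r) (Fin r) ℂ)
    (hFmeas : ∀ i j, Measurable fun θ => F θ i j)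
    (A B : (n : ℕ) → Matrix (Fin (d n)) (Fin (d n)) ℂ)
    (hdist : ∀ G : ℝ → ℂ, Continuous G → HasCompactSupport G →
      Tendsto (fun n => (1 / (d n : ℝ)) •
          ∑ j ∈ Finset.range (d n), G (svalFun (A n) j))
        atTop (nhds ((1 / (volume Ω).toReal) •
          ∫ θ in Ω, (1 / (r : ℝ)) • ∑ i, G (svals (F θ) i)))) 
    (hzd : ∀ G : ℝ → ℂ, Continuous G → HasCompactSupport G →
      Tendsto (fun n => (1 / (d n : ℝ)) •
          ∑ j ∈ Finset.range (d n), G (svalFun (A n - B n) j))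
        atTop (nhds (G 0)))
    (hAb : ∃ C : ℝ, ∀ n, specNorm (A n) ≤ C)
    (hBb : ∃ C : ℝ, ∀ n, specNorm (B n) ≤ C) :
    ∀ G : ℝ → ℂ, Continuous G → HasCompactSupport G →
      Tendsto (fun n => (1 / (d n : ℝ)) •
          ∑ j ∈ Finset.range (d n), G (svalFun (B n) j))
        atTop (nhds ((1 / (volume Ω).toReal) •
          ∫ θ in Ω, (1 / (r : ℝ)) • ∑ i, G (svals (F θ) i))) := by
  intro G hG hGsupp
  obtain ⟨C₀, hCb₀⟩ := hAb
  obtain ⟨C₁, hCb₁⟩ := hBb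
  set C : ℝ := max 1 (max C₀ C₁) with hCdef
  have hC1 : (1:ℝ) ≤ C := le_max_left _ _
  have hC0 : (0:ℝ) < C := lt_of_lt_of_le one_pos hC1
  have hCA : ∀ n, specNorm (A n) ≤ C :=
    fun n => (hCb₀ n).trans ((le_max_left _ _).trans (le_max_right _ _))
  have hCB : ∀ n, specNorm (B n) ≤ C :=
    fun n => (hCb₁ n).trans ((le_max_right _ _).trans (le_max_right _ _))
  have hnA : ∀ n, ‖A n‖ ≤ C := fun n => (norm_le_specNorm _).trans (hCA n)
  have hnB : ∀ n, ‖B n‖ ≤ C := fun n => (norm_le_specNorm _).trans (hCB n)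
  have hsA : ∀ n i, svals (A n) i ≤ C := fun n i => (svals_le_specNorm _ i).trans (hCA n)
  have hsB : ∀ n i, svals (B n) i ≤ C := fun n i => (svals_le_specNorm _ i).trans (hCB n)
  have hsAB : ∀ n i, svals (A n - B n) i ≤ 2 * C := by
    intro n i
    have h1 : svals (A n - B n) i ≤ ‖A n - B n‖ := sval_le_norm _ i
    have h2 : ‖A n - B n‖ ≤ ‖A n‖ + ‖B n‖ := norm_sub_le _ _
    linarith [hnA n, hnB n]
  -- Step 2 : mean of squared singular values of A - B tends to 0
  have hu : Tendsto (fun n => (1/(d n : ℝ)) * ∑ i, svals (A n - B n) i ^ 2) atTop (nhds 0) := by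
    set K : ℝ := 2 * C with hK
    have hK0 : (0:ℝ) < K := by simp only [hK]; linarith
    set H : ℝ → ℝ := fun x => min (x ^ 2) (K ^ 2) * max 0 (min 1 (2 - |x| / K)) with hH
    have hHcont : Continuous H := by
      apply Continuous.mul
      · exact (continuous_pow 2).min continuous_const
      · exact continuous_const.max (continuous_const.min
          (continuous_const.sub (continuous_abs.div_const K)))
    have hHsupp : HasCompactSupport H := by
      refine HasCompactSupport.intro (isCompact_Icc (a := -(2*K)) (b := 2*K)) ?_
      intro x hx
      simp only [Set.mem_Icc, not_and_or, not_le] at hx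
      have habs : 2 * K ≤ |x| := by
        rcases hx with hx | hx
        · rw [abs_of_neg (by linarith)]; linarith
        · rw [abs_of_pos (by linarith)]; linarith
      have : 2 - |x| / K ≤ 0 := by
        rw [sub_nonpos, le_div_iff₀ hK0]; linarith
      have hmin : min 1 (2 - |x| / K) ≤ 0 := le_trans (min_le_right _ _) this
      simp only [hH]
      rw [max_eq_left hmin, mul_zero]
    have hHval : ∀ x : ℝ, 0 ≤ x → x ≤ K → H x = x ^ 2 := by
      intro x h0 h1
      have hm1 : min (x ^ 2) (K ^ 2) = x ^ 2 := min_eq_left (by nlinarith)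
      have h2 : (1:ℝ) ≤ 2 - |x| / K := by
        rw [abs_of_nonneg h0]
        have : x / K ≤ 1 := (div_le_one hK0).mpr h1
        linarith
      have hm2 : max 0 (min 1 (2 - |x| / K)) = 1 := by
        rw [min_eq_left h2, max_eq_right zero_le_one]
      simp only [hH]; rw [hm1, hm2, mul_one]
    have hH0 : H 0 = 0 := by
      simp only [hH]
      rw [min_eq_left (by simpa using sq_nonneg K : (0:ℝ)^2 ≤ K^2)]
      norm_num
    have h1 := hzd (fun x => ((H x : ℝ) : ℂ))
      (Complex.continuous_ofReal.comp hHcont)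
      (hHsupp.comp_left (g := Complex.ofReal) Complex.ofReal_zero)
    simp only [hH0, Complex.ofReal_zero] at h1
    have h2 := (Complex.continuous_re.tendsto 0).comp h1
    simp only [Complex.zero_re] at h2
    refine h2.congr fun n => ?_
    simp only [Function.comp_apply]
    rw [Complex.smul_re, Complex.re_sum]
    simp only [Complex.ofReal_re]
    rw [sum_svalFun (A n - B n) H, smul_eq_mul]
    congr 1
    exact Finset.sum_congr rfl fun i _ =>
      hHval _ (svals_nonneg _ i) (hsAB n i)
  -- Step 3 : normalized trace differences of powers tend to 0
  have htr : ∀ k : ℕ, Tendsto (fun n =>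
      (1/(d n : ℝ)) • ((((B n)ᴴ * B n) ^ k).trace - (((A n)ᴴ * A n) ^ k).trace))
      atTop (nhds (0:ℂ)) := by
    intro k
    rcases Nat.eq_zero_or_pos k with hk | hk
    · subst hk
      simp only [pow_zero, sub_self, smul_zero]
      exact tendsto_const_nhds
    · set Kk : ℝ := 2 * k * C ^ (2 * (k-1) + 1) with hKk
      have hKk0 : 0 ≤ Kk := by positivity
      have hbound : ∀ n, ‖(1/(d n : ℝ)) • ((((B n)ᴴ * B n) ^ k).trace - (((A n)ᴴ * A n) ^ k).trace)‖
          ≤ Kk * Real.sqrt ((1/(d n : ℝ)) * ∑ i, svals (A n - B n) i ^ 2) := by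
        intro n
        set X := A n
        set Y := B n
        set P : Matrix (Fin (d n)) (Fin (d n)) ℂ := Xᴴ * X with hP
        set Q : Matrix (Fin (d n)) (Fin (d n)) ℂ := Yᴴ * Y with hQ
        set D : ℝ := frob (X - Y) with hD
        have hD0 : 0 ≤ D := frob_nonneg _
        have hDsq : D ^ 2 = ∑ i, svals (X - Y) i ^ 2 := frob_sq_eq_sum_svals _
        rcases Nat.eq_zero_or_pos (d n) with hdn | hdn
        · have hz : ((Q ^ k).trace - (P ^ k).trace) = 0 := by
            rw [Matrix.trace, Matrix.trace]
            have : (Finset.univ : Finset (Fin (d n))) = ∅ := by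
              rw [hdn]; rfl
            simp [this]
          rw [hz, smul_zero, norm_zero]
          positivity
        -- nontrivial case
        have hYX : frob (Y - X) = D := by
          rw [hD, ← frob_neg (X - Y), neg_sub]
        have hQP : frob (Q - P) ≤ 2 * C * D := by
          have hsplit : Q - P = Yᴴ * (Y - X) + (Y - X)ᴴ * X := by
            rw [Matrix.conjTranspose_sub]
            noncomm_ring
          rw [hsplit]
          have e1 : frob (Yᴴ * (Y - X)) ≤ ‖Yᴴ‖ * frob (Y - X) := frob_mul_le_left _ _
          have e2 : frob ((Y - X)ᴴ * X) ≤ frob ((Y - X)ᴴ) * ‖X‖ := frob_mul_le_right _ _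
          have e3 : frob (Yᴴ * (Y - X) + (Y - X)ᴴ * X)
              ≤ frob (Yᴴ * (Y - X)) + frob ((Y - X)ᴴ * X) := frob_add_le _ _
          rw [Matrix.l2_opNorm_conjTranspose] at e1
          rw [frob_conjTranspose, hYX] at e2
          rw [hYX] at e1
          have hXC : ‖X‖ ≤ C := hnA n
          have hYC : ‖Y‖ ≤ C := hnB n
          calc frob (Yᴴ * (Y - X) + (Y - X)ᴴ * X) ≤ ‖Y‖ * D + D * ‖X‖ := by
                exact e3.trans (add_le_add e1 e2)
            _ ≤ C * D + D * C := add_le_add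
                (mul_le_mul_of_nonneg_right hYC hD0) (mul_le_mul_of_nonneg_left hXC hD0)
            _ = 2 * C * D := by ring
        have hPC : ‖P‖ ≤ C ^ 2 := by
          rw [hP, Matrix.l2_opNorm_conjTranspose_mul_self, sq]
          exact mul_le_mul (hnA n) (hnA n) (norm_nonneg _) (le_of_lt hC0)
        have hQC : ‖Q‖ ≤ C ^ 2 := by
          rw [hQ, Matrix.l2_opNorm_conjTranspose_mul_self, sq]
          exact mul_le_mul (hnB n) (hnB n) (norm_nonneg _) (le_of_lt hC0)
        -- power difference bound
        have hpow : ∀ j : ℕ, frob (Q ^ (j+1) - P ^ (j+1))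
            ≤ (j+1 : ℝ) * C ^ (2*j) * frob (Q - P) := by
          intro j
          induction j with
          | zero => simp
          | succ j ih =>
              have hsplit : Q ^ (j+2) - P ^ (j+2)
                  = Q ^ (j+1) * (Q - P) + (Q ^ (j+1) - P ^ (j+1)) * P := by
                noncomm_ring
              have hQpow : ‖Q ^ (j+1)‖ ≤ (C ^ 2) ^ (j+1) := by
                refine le_trans (norm_pow_le' Q (Nat.succ_pos j)) ?_
                exact pow_le_pow_left₀ (norm_nonneg _) hQC _
              have e1 : frob (Q ^ (j+1) * (Q - P)) ≤ (C ^ 2) ^ (j+1) * frob (Q - P) := by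
                refine le_trans (frob_mul_le_left _ _) ?_
                exact mul_le_mul_of_nonneg_right hQpow (frob_nonneg _)
              have e2 : frob ((Q ^ (j+1) - P ^ (j+1)) * P)
                  ≤ ((j+1 : ℝ) * C ^ (2*j) * frob (Q - P)) * C ^ 2 := by
                refine le_trans (frob_mul_le_right _ _) ?_
                exact mul_le_mul ih hPC (norm_nonneg _)
                  (mul_nonneg (by positivity) (frob_nonneg _))
              calc frob (Q ^ (j+2) - P ^ (j+2))
                  ≤ frob (Q ^ (j+1) * (Q - P)) + frob ((Q ^ (j+1) - P ^ (j+1)) * P) := by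
                    rw [hsplit]; exact frob_add_le _ _
                _ ≤ (C ^ 2) ^ (j+1) * frob (Q - P)
                    + ((j+1 : ℝ) * C ^ (2*j) * frob (Q - P)) * C ^ 2 := add_le_add e1 e2
                _ = ((j:ℝ)+1+1) * C ^ (2*(j+1)) * frob (Q - P) := by
                    rw [← pow_mul]
                    ring
                _ = ((j+1:ℕ)+1 : ℝ) * C ^ (2*(j+1)) * frob (Q - P) := by
                    push_cast
                    ring
        -- trace bound
        obtain ⟨j, hj⟩ : ∃ j, k = j + 1 := ⟨k - 1, (Nat.succ_pred_eq_of_pos hk).symm⟩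
        have htrb : ‖(Q ^ k).trace - (P ^ k).trace‖
            ≤ Real.sqrt (d n) * ((k:ℝ) * C ^ (2*(k-1)) * (2 * C * D)) := by
          have h1 : (Q ^ k).trace - (P ^ k).trace = (Q ^ k - P ^ k).trace := by
            rw [Matrix.trace_sub]
          rw [h1]
          have h2 := norm_trace_le (Q ^ k - P ^ k)
          have h3 : frob (Q ^ k - P ^ k) ≤ (k:ℝ) * C ^ (2*(k-1)) * (2 * C * D) := by
            subst hj
            simp only [Nat.add_sub_cancel]
            refine le_trans (hpow j) ?_
            push_cast
            refine mul_le_mul_of_nonneg_left hQP ?_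
            positivity
          have hcard : (Fintype.card (Fin (d n)) : ℝ) = (d n : ℝ) := by simp
          calc ‖(Q ^ k - P ^ k).trace‖ ≤ Real.sqrt (Fintype.card (Fin (d n))) * frob (Q ^ k - P ^ k) := h2
            _ ≤ Real.sqrt (d n) * ((k:ℝ) * C ^ (2*(k-1)) * (2 * C * D)) := by
                rw [hcard]
                exact mul_le_mul_of_nonneg_left h3 (Real.sqrt_nonneg _)
        -- choose the sqrt form
        have hdpos : (0:ℝ) < (d n : ℝ) := by exact_mod_cast hdn
        have hsqrtp : Real.sqrt (d n) * Real.sqrt (d n) = (d n : ℝ) :=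
          Real.mul_self_sqrt (le_of_lt hdpos)
        have hsqrtpos : (0:ℝ) < Real.sqrt (d n) := Real.sqrt_pos.mpr hdpos
        have hform : Real.sqrt ((1/(d n : ℝ)) * ∑ i, svals (A n - B n) i ^ 2)
            = D / Real.sqrt (d n) := by
          have heq : (1/(d n : ℝ)) * ∑ i, svals (A n - B n) i ^ 2 = D ^ 2 / (d n : ℝ) := by
            rw [hDsq]
            have hXY : X - Y = A n - B n := rfl
            rw [hXY]
            ring
          rw [heq, Real.sqrt_div (sq_nonneg D), Real.sqrt_sq hD0]
        rw [hform]
        have hns : ‖(1/(d n : ℝ)) • ((Q ^ k).trace - (P ^ k).trace)‖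
            = (1/(d n : ℝ)) * ‖(Q ^ k).trace - (P ^ k).trace‖ := by
          rw [norm_smul, Real.norm_eq_abs, abs_of_nonneg (by positivity)]
        rw [hns]
        calc (1/(d n : ℝ)) * ‖(Q ^ k).trace - (P ^ k).trace‖
            ≤ (1/(d n : ℝ)) * (Real.sqrt (d n) * ((k:ℝ) * C ^ (2*(k-1)) * (2 * C * D))) := by
              exact mul_le_mul_of_nonneg_left htrb (by positivity)
          _ = Kk * (D / Real.sqrt (d n)) := by
              rw [hKk, ← hsqrtp, pow_succ]
              field_simp
              rw [Real.sqrt_sq (Real.sqrt_nonneg _)]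
      have hlim : Tendsto (fun n => Kk * Real.sqrt
          ((1/(d n : ℝ)) * ∑ i, svals (A n - B n) i ^ 2)) atTop (nhds 0) := by
        have h1 : Tendsto (fun n => Real.sqrt
            ((1/(d n : ℝ)) * ∑ i, svals (A n - B n) i ^ 2)) atTop (nhds 0) := by
          have h2 := (Real.continuous_sqrt.tendsto 0).comp hu
          rw [Real.sqrt_zero] at h2
          exact h2
        have h3 := h1.const_mul Kk
        rw [mul_zero] at h3
        exact h3
      exact squeeze_zero_norm hbound hlim
  -- Step 4 : polynomial test functions
  have hpoly : ∀ P : Polynomial ℂ, Tendsto (fun n => (1/(d n : ℝ)) •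
      (∑ i, P.eval (((svals (B n) i : ℝ) : ℂ) ^ 2)
        - ∑ i, P.eval (((svals (A n) i : ℝ) : ℂ) ^ 2))) atTop (nhds (0:ℂ)) := by
    intro P
    set N : ℕ := P.natDegree + 1 with hN
    have hNdeg : P.natDegree < N := Nat.lt_succ_self _
    have hrw : ∀ n, (1/(d n : ℝ)) •
        (∑ i, P.eval (((svals (B n) i : ℝ) : ℂ) ^ 2)
          - ∑ i, P.eval (((svals (A n) i : ℝ) : ℂ) ^ 2))
        = ∑ k ∈ Finset.range N, P.coeff k *
            ((1/(d n : ℝ)) • ((((B n)ᴴ * B n) ^ k).trace - (((A n)ᴴ * A n) ^ k).trace)) := by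
      intro n
      rw [sum_eval_eq_trace (B n) P hNdeg, sum_eval_eq_trace (A n) P hNdeg,
        ← Finset.sum_sub_distrib, Finset.smul_sum]
      refine Finset.sum_congr rfl fun k _ => ?_
      rw [← mul_sub, mul_smul_comm]
    have hsum : Tendsto (fun n => ∑ k ∈ Finset.range N, P.coeff k *
        ((1/(d n : ℝ)) • ((((B n)ᴴ * B n) ^ k).trace - (((A n)ᴴ * A n) ^ k).trace)))
        atTop (nhds (0:ℂ)) := by
      have h0 : (0:ℂ) = ∑ k ∈ Finset.range N, (0:ℂ) := by simp
      rw [h0]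
      refine tendsto_finset_sum _ fun k _ => ?_
      have := (htr k).const_mul (P.coeff k)
      rw [mul_zero] at this
      exact this
    exact hsum.congr fun n => (hrw n).symm
  -- Step 5 : conclude
  have key : Tendsto (fun n => ((1 / (d n : ℝ)) •
        ∑ j ∈ Finset.range (d n), G (svalFun (B n) j))
      - ((1 / (d n : ℝ)) • ∑ j ∈ Finset.range (d n), G (svalFun (A n) j)))
      atTop (nhds (0:ℂ)) := by
    rw [NormedAddCommGroup.tendsto_nhds_zero]
    intro ε hε
    set ε' : ℝ := ε/6 with hε'def
    have hε' : 0 < ε' := by positivity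
    have hcontre : ContinuousOn (fun t : ℝ => (G (Real.sqrt t)).re) (Set.Icc 0 (C^2)) :=
      ((Complex.continuous_re.comp (hG.comp Real.continuous_sqrt)).continuousOn)
    have hcontim : ContinuousOn (fun t : ℝ => (G (Real.sqrt t)).im) (Set.Icc 0 (C^2)) :=
      ((Complex.continuous_im.comp (hG.comp Real.continuous_sqrt)).continuousOn)
    obtain ⟨P1, hP1⟩ := exists_polynomial_near_of_continuousOn 0 (C^2)
      (fun t => (G (Real.sqrt t)).re) hcontre ε' hε'
    obtain ⟨P2, hP2⟩ := exists_polynomial_near_of_continuousOn 0 (C^2)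
      (fun t => (G (Real.sqrt t)).im) hcontim ε' hε'
    set PC : Polynomial ℂ := P1.map (algebraMap ℝ ℂ)
      + Polynomial.C Complex.I * P2.map (algebraMap ℝ ℂ) with hPCdef
    have hPCeval : ∀ t : ℝ, PC.eval ((t:ℝ) : ℂ)
        = ((P1.eval t : ℝ) : ℂ) + Complex.I * ((P2.eval t : ℝ) : ℂ) := by
      intro t
      rw [hPCdef, Polynomial.eval_add, Polynomial.eval_mul, Polynomial.eval_C]
      have h1 : (P1.map (algebraMap ℝ ℂ)).eval ((t:ℝ) : ℂ) = ((P1.eval t : ℝ) : ℂ) := by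
        rw [← Complex.coe_algebraMap, Polynomial.eval_map, Polynomial.eval₂_at_apply]
      have h2 : (P2.map (algebraMap ℝ ℂ)).eval ((t:ℝ) : ℂ) = ((P2.eval t : ℝ) : ℂ) := by
        rw [← Complex.coe_algebraMap, Polynomial.eval_map, Polynomial.eval₂_at_apply]
      rw [h1, h2]
    have happrox : ∀ x : ℝ, 0 ≤ x → x ≤ C → ‖G x - PC.eval (((x:ℝ):ℂ) ^ 2)‖ ≤ 2 * ε' := by
      intro x h0 h1
      have hx2 : x^2 ∈ Set.Icc (0:ℝ) (C^2) := by
        constructor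
        · positivity
        · nlinarith
      have hsq : Real.sqrt (x^2) = x := Real.sqrt_sq h0
      have hre := hP1 (x^2) hx2
      have him := hP2 (x^2) hx2
      rw [hsq] at hre him
      have hcast : (((x:ℝ):ℂ))^2 = (((x^2 : ℝ)):ℂ) := by push_cast; ring
      rw [hcast, hPCeval (x^2)]
      set z : ℂ := G x - (((P1.eval (x^2) : ℝ) : ℂ) + Complex.I * ((P2.eval (x^2) : ℝ) : ℂ)) with hz
      have hzre : z.re = (G x).re - P1.eval (x^2) := by
        simp [hz, Complex.add_re, Complex.mul_re]
      have hzim : z.im = (G x).im - P2.eval (x^2) := by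
        simp [hz, Complex.add_im, Complex.mul_im]
      have hnorm : ‖z‖ ≤ |z.re| + |z.im| := Complex.norm_le_abs_re_add_abs_im z
      rw [hzre, hzim] at hnorm
      have e1 : |(G x).re - P1.eval (x^2)| ≤ ε' := by
        rw [abs_sub_comm]; exact le_of_lt hre
      have e2 : |(G x).im - P2.eval (x^2)| ≤ ε' := by
        rw [abs_sub_comm]; exact le_of_lt him
      calc ‖z‖ ≤ |(G x).re - P1.eval (x^2)| + |(G x).im - P2.eval (x^2)| := hnorm
        _ ≤ ε' + ε' := add_le_add e1 e2
        _ = 2 * ε' := by ring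
    -- eventually bound from hpoly
    have hev := (NormedAddCommGroup.tendsto_nhds_zero.mp (hpoly PC)) ε' hε'
    filter_upwards [hev] with n hn
    -- per-n estimate
    set SB : ℂ := (1 / (d n : ℝ)) • ∑ j ∈ Finset.range (d n), G (svalFun (B n) j) with hSB
    set SA : ℂ := (1 / (d n : ℝ)) • ∑ j ∈ Finset.range (d n), G (svalFun (A n) j) with hSA
    set PB : ℂ := (1 / (d n : ℝ)) •
      ∑ j ∈ Finset.range (d n), PC.eval (((svalFun (B n) j : ℝ) : ℂ) ^ 2) with hPB
    set PA : ℂ := (1 / (d n : ℝ)) •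
      ∑ j ∈ Finset.range (d n), PC.eval (((svalFun (A n) j : ℝ) : ℂ) ^ 2) with hPA
    have hdninv : (1/(d n : ℝ)) * (d n : ℝ) ≤ 1 := by
      rcases Nat.eq_zero_or_pos (d n) with h | h
      · rw [h]; norm_num
      · have : (0:ℝ) < (d n : ℝ) := by exact_mod_cast h
        rw [one_div, inv_mul_cancel₀ (ne_of_gt this)]
    have hT1 : ∀ (M : (n : ℕ) → Matrix (Fin (d n)) (Fin (d n)) ℂ)
        (hsM : ∀ n i, svals (M n) i ≤ C),
        ‖((1 / (d n : ℝ)) • ∑ j ∈ Finset.range (d n), G (svalFun (M n) j))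
          - ((1 / (d n : ℝ)) •
            ∑ j ∈ Finset.range (d n), PC.eval (((svalFun (M n) j : ℝ) : ℂ) ^ 2))‖ ≤ 2 * ε' := by
      intro M hsM
      rw [← smul_sub, ← Finset.sum_sub_distrib]
      rw [norm_smul, Real.norm_eq_abs, abs_of_nonneg (by positivity)]
      have hterm : ∀ j ∈ Finset.range (d n),
          ‖G (svalFun (M n) j) - PC.eval (((svalFun (M n) j : ℝ) : ℂ) ^ 2)‖ ≤ 2 * ε' := by
        intro j hj
        rw [Finset.mem_range] at hj
        exact happrox _ (svalFun_nonneg _ _) (svalFun_le _ hj (hsM n))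
      calc (1/(d n : ℝ)) * ‖∑ j ∈ Finset.range (d n),
            (G (svalFun (M n) j) - PC.eval (((svalFun (M n) j : ℝ) : ℂ) ^ 2))‖
          ≤ (1/(d n : ℝ)) * ∑ j ∈ Finset.range (d n),
            ‖G (svalFun (M n) j) - PC.eval (((svalFun (M n) j : ℝ) : ℂ) ^ 2)‖ := by
            refine mul_le_mul_of_nonneg_left (norm_sum_le _ _) (by positivity)
        _ ≤ (1/(d n : ℝ)) * ∑ _j ∈ Finset.range (d n), (2 * ε') := by
            refine mul_le_mul_of_nonneg_left (Finset.sum_le_sum hterm) (by positivity)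
        _ = ((1/(d n : ℝ)) * (d n : ℝ)) * (2 * ε') := by
            rw [Finset.sum_const, Finset.card_range, nsmul_eq_mul]
            ring
        _ ≤ 1 * (2 * ε') := by
            refine mul_le_mul_of_nonneg_right hdninv (by positivity)
        _ = 2 * ε' := one_mul _
    have hB1 : ‖SB - PB‖ ≤ 2 * ε' := hT1 B hsB
    have hA1 : ‖SA - PA‖ ≤ 2 * ε' := hT1 A hsA
    have hmid : ‖PB - PA‖ < ε' := by
      have hPBeq : PB = (1 / (d n : ℝ)) • ∑ i, PC.eval (((svals (B n) i : ℝ) : ℂ) ^ 2) := by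
        rw [hPB, sum_svalFun (B n) (fun x => PC.eval (((x:ℝ):ℂ)^2))]
      have hPAeq : PA = (1 / (d n : ℝ)) • ∑ i, PC.eval (((svals (A n) i : ℝ) : ℂ) ^ 2) := by
        rw [hPA, sum_svalFun (A n) (fun x => PC.eval (((x:ℝ):ℂ)^2))]
      rw [hPBeq, hPAeq, ← smul_sub]
      exact hn
    calc ‖SB - SA‖ = ‖(SB - PB) + (PB - PA) + (PA - SA)‖ := by
          congr 1
          ring
      _ ≤ ‖(SB - PB) + (PB - PA)‖ + ‖PA - SA‖ := norm_add_le _ _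
      _ ≤ ‖SB - PB‖ + ‖PB - PA‖ + ‖PA - SA‖ := by
          refine add_le_add_left (norm_add_le _ _) _
      _ ≤ 2 * ε' + ε' + 2 * ε' := by
          refine add_le_add (add_le_add hB1 (le_of_lt hmid)) ?_
          rw [← norm_neg, neg_sub]
          exact hA1
      _ < ε := by
          rw [hε'def]
          linarith
  have hfinal := key.add (hdist G hG hGsupp)
  rw [zero_add] at hfinal
  refine hfinal.congr fun n => ?_
  ring
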